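/- Let mu(n) = min{ l >= 1 : there exist positive integers u_1,...,u_l with n = sum_{j=1}^l (2^{u_j} - 1) } for a positive integer n. Then mu(n) is also equal to min{ l >= 1 : alpha(n + l) <= l }, where alpha denotes the binary digit sum. -/

import Mathlib

def alpha (n : ℕ) : ℕ := (Nat.digits 2 n).sum

lemma alpha_two_mul (m : ℕ) : alpha (2*m) = alpha m := by
  rcases Nat.eq_zero_or_pos m with rfl|h
  · simp [alpha]
  · unfold alpha
    rw [Nat.digits_def' (by norm_num : (1:ℕ) < 2) (by omega)]
    simp

lemma alpha_two_mul_add_one (m : ℕ) : alpha (2*m+1) = alpha m + 1 := by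
  unfold alpha
  rw [Nat.digits_def' (by norm_num : (1:ℕ) < 2) (by omega)]
  simp [Nat.add_mul_div_left, Nat.add_comm]

lemma alpha_pos : ∀ m, 0 < m → 0 < alpha m := by
  intro m
  induction m using Nat.strong_induction_on with
  | _ m ih =>
    intro hm
    rcases Nat.even_or_odd m with ⟨k,hk⟩|⟨k,hk⟩
    · have hm2 : m = 2*k := by omega
      subst hm2
      rw [alpha_two_mul]
      exact ih k (by omega) (by omega)
    · subst hk
      rw [alpha_two_mul_add_one]; omega

lemma alpha_le_self : ∀ m, alpha m ≤ m := by
  intro m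
  induction m using Nat.strong_induction_on with
  | _ m ih =>
    rcases Nat.eq_zero_or_pos m with rfl|hm
    · simp [alpha]
    rcases Nat.even_or_odd m with ⟨k,hk⟩|⟨k,hk⟩
    · have hm2 : m = 2*k := by omega
      subst hm2
      rw [alpha_two_mul]
      have := ih k (by omega); omega
    · subst hk
      rw [alpha_two_mul_add_one]
      have := ih k (by omega); omega

lemma alpha_succ_le : ∀ m, alpha (m+1) ≤ alpha m + 1 := by
  intro m
  induction m using Nat.strong_induction_on with
  | _ m ih =>
    rcases Nat.even_or_odd m with ⟨k,hk⟩|⟨k,hk⟩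
    · have hm2 : m = 2*k := by omega
      subst hm2
      rw [alpha_two_mul_add_one, alpha_two_mul]
    · subst hk
      have h1 : 2*k+1+1 = 2*(k+1) := by ring
      rw [h1, alpha_two_mul, alpha_two_mul_add_one]
      have := ih k (by omega); omega

lemma alpha_add_le : ∀ a b, alpha (a+b) ≤ alpha a + alpha b := by
  intro a
  induction a using Nat.strong_induction_on with
  | _ a ih =>
    intro b
    rcases Nat.eq_zero_or_pos a with rfl|ha
    · simp
    rcases Nat.even_or_odd a with ⟨a',ha'⟩|⟨a',ha'⟩ <;>
      rcases Nat.even_or_odd b with ⟨b',hb'⟩|⟨b',hb'⟩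
    · have h1 : a = 2*a' := by omega
      have h2 : b = 2*b' := by omega
      subst h1; subst h2
      have h3 : 2*a'+2*b' = 2*(a'+b') := by ring
      rw [h3, alpha_two_mul, alpha_two_mul, alpha_two_mul]
      exact ih a' (by omega) b'
    · have h1 : a = 2*a' := by omega
      subst h1; subst hb'
      have h3 : 2*a'+(2*b'+1) = 2*(a'+b')+1 := by ring
      rw [h3, alpha_two_mul, alpha_two_mul_add_one, alpha_two_mul_add_one]
      have := ih a' (by omega) b'; omega
    · have h2 : b = 2*b' := by omega
      subst ha'; subst h2
      have h3 : 2*a'+1+2*b' = 2*(a'+b')+1 := by ring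
      rw [h3, alpha_two_mul, alpha_two_mul_add_one, alpha_two_mul_add_one]
      have := ih a' (by omega) b'; omega
    · subst ha'; subst hb'
      have h3 : 2*a'+1+(2*b'+1) = 2*(a'+b'+1) := by ring
      rw [h3, alpha_two_mul, alpha_two_mul_add_one, alpha_two_mul_add_one]
      have h4 := alpha_succ_le (a'+b')
      have := ih a' (by omega) b'; omega

lemma alpha_pow (k : ℕ) : alpha (2^k) = 1 := by
  induction k with
  | zero => simp [alpha]
  | succ k ih => rw [pow_succ, mul_comm, alpha_two_mul, ih]

lemma alpha_sum_le {ι : Type*} (s : Finset ι) (f : ι → ℕ) :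
    alpha (∑ i ∈ s, f i) ≤ ∑ i ∈ s, alpha (f i) := by
  induction s using Finset.cons_induction with
  | empty => simp [alpha]
  | cons a s ha ih =>
    rw [Finset.sum_cons, Finset.sum_cons]
    exact le_trans (alpha_add_le _ _) (by omega)

lemma exists_rep_alpha : ∀ m, ∃ u : Fin (alpha m) → ℕ, m = ∑ j, 2^(u j) := by
  intro m
  induction m using Nat.strong_induction_on with
  | _ m ih =>
    rcases Nat.eq_zero_or_pos m with rfl|hm
    · have h0 : alpha 0 = 0 := by simp [alpha]
      rw [h0]
      exact ⟨fun j => 0, by simp⟩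
    rcases Nat.even_or_odd m with ⟨k,hk⟩|⟨k,hk⟩
    · have hm2 : m = 2*k := by omega
      subst hm2
      obtain ⟨u, hu⟩ := ih k (by omega)
      rw [alpha_two_mul]
      refine ⟨fun j => u j + 1, ?_⟩
      have : ∑ j, 2^(u j + 1) = 2 * ∑ j, 2^(u j) := by
        rw [Finset.mul_sum]
        exact Finset.sum_congr rfl (fun j _ => by ring)
      rw [this, ← hu]
    · subst hk
      obtain ⟨u, hu⟩ := ih k (by omega)
      rw [alpha_two_mul_add_one]
      refine ⟨Fin.cons 0 (fun j => u j + 1), ?_⟩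
      rw [Fin.sum_univ_succ]
      simp only [Fin.cons_zero, Fin.cons_succ]
      have : ∑ j, 2^(u j + 1) = 2 * ∑ j, 2^(u j) := by
        rw [Finset.mul_sum]
        exact Finset.sum_congr rfl (fun j _ => by ring)
      rw [this, ← hu]
      omega

lemma split_rep {l m : ℕ} (u : Fin l → ℕ) (hm : m = ∑ j, 2^(u j)) (hlm : l < m) :
    ∃ u' : Fin (l+1) → ℕ, m = ∑ j, 2^(u' j) := by
  have hex : ∃ j, 0 < u j := by
    by_contra h
    push_neg at h
    have : m = l := by
      rw [hm]
      have : ∀ j : Fin l, 2^(u j) = 1 := fun j => by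
        have := h j; interval_cases (u j) <;> simp
      simp [this]
    omega
  obtain ⟨j0, hj0⟩ := hex
  refine ⟨Fin.cons (u j0 - 1) (Function.update u j0 (u j0 - 1)), ?_⟩
  rw [Fin.sum_univ_succ]
  simp only [Fin.cons_zero, Fin.cons_succ]
  have hupd : ∑ j, 2^(Function.update u j0 (u j0 - 1) j)
      = 2^(u j0 - 1) + ∑ j ∈ Finset.univ \ {j0}, 2^(u j) := by
    rw [Finset.sum_eq_add_sum_sdiff_singleton_of_mem (Finset.mem_univ j0)
      (fun j => 2^(Function.update u j0 (u j0 - 1) j))]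
    congr 1
    · simp
    · apply Finset.sum_congr rfl
      intro j hj
      have hne : j ≠ j0 := by simpa using (Finset.mem_sdiff.mp hj).2
      rw [Function.update_of_ne hne]
  have hsplit : 2^(u j0) = 2^(u j0 - 1) + 2^(u j0 - 1) := by
    conv_lhs => rw [← Nat.succ_pred_eq_of_pos hj0]
    rw [pow_succ, Nat.pred_eq_sub_one]; ring
  have hm' : m = 2^(u j0) + ∑ j ∈ Finset.univ \ {j0}, 2^(u j) := by
    rw [hm]
    exact Finset.sum_eq_add_sum_sdiff_singleton_of_mem (Finset.mem_univ j0) _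
  rw [hupd]
  omega

lemma exists_rep {m : ℕ} : ∀ l, alpha m ≤ l → l ≤ m → ∃ u : Fin l → ℕ, m = ∑ j, 2^(u j) := by
  intro l hl
  induction l, hl using Nat.le_induction with
  | base => intro _; exact exists_rep_alpha m
  | succ l hl ih =>
    intro hlm
    obtain ⟨u, hu⟩ := ih (by omega)
    exact split_rep u hu (by omega)

/-- Minimal number of summands of the form `2^u - 1` (with `u > 0`) needed for `n`. -/
noncomputable def mu (n : ℕ) : ℕ :=
  sInf {l : ℕ | 1 ≤ l ∧ ∃ u : Fin l → ℕ, (∀ j, 0 < u j) ∧ n = ∑ j, (2 ^ (u j) - 1)}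

theorem mu_eq_min_alpha (n : ℕ) (hn : 0 < n) :
    mu n = sInf {l : ℕ | 1 ≤ l ∧ alpha (n + l) ≤ l} := by
  set A : Set ℕ := {l : ℕ | 1 ≤ l ∧ ∃ u : Fin l → ℕ, (∀ j, 0 < u j) ∧ n = ∑ j, (2 ^ (u j) - 1)}
    with hA
  set B : Set ℕ := {l : ℕ | 1 ≤ l ∧ alpha (n + l) ≤ l} with hB
  -- A ⊆ B
  have hAB : A ⊆ B := by
    rintro l ⟨hl1, u, hu, hsum⟩
    refine ⟨hl1, ?_⟩
    have hnl : n + l = ∑ j, 2 ^ (u j) := by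
      have h1 : ∑ j : Fin l, ((2:ℕ) ^ (u j) - 1 + 1) = ∑ j : Fin l, 2 ^ (u j) :=
        Finset.sum_congr rfl fun j _ => Nat.succ_pred_eq_of_pos (Nat.pow_pos (by norm_num))
      have h2 : ∑ j : Fin l, ((2:ℕ) ^ (u j) - 1 + 1)
          = ∑ j : Fin l, ((2:ℕ) ^ (u j) - 1) + l := by
        rw [Finset.sum_add_distrib]; simp [Finset.card_univ]
      omega
    rw [hnl]
    calc alpha (∑ j, 2 ^ (u j)) ≤ ∑ j : Fin l, alpha (2 ^ (u j)) := alpha_sum_le _ _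
      _ = l := by simp [alpha_pow, Finset.card_univ]
  -- n ∈ A
  have hnA : n ∈ A := by
    refine ⟨hn, fun _ => 1, fun _ => one_pos, ?_⟩
    simp [Finset.card_univ]
  have hnB : n ∈ B := hAB hnA
  set l₀ := sInf B with hl₀
  have hl₀B : l₀ ∈ B := Nat.sInf_mem ⟨n, hnB⟩
  have hl₀n : l₀ ≤ n := Nat.sInf_le hnB
  obtain ⟨hl₀1, hl₀a⟩ := hl₀B
  -- n + l₀ is even
  have heven : (n + l₀) % 2 = 0 := by
    by_contra hodd
    have hodd' : n + l₀ = 2 * ((n + l₀) / 2) + 1 := by omega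
    set k := (n + l₀) / 2 with hk
    rcases eq_or_lt_of_le hl₀1 with h1|h2
    · -- l₀ = 1
      have : alpha (n + l₀) = alpha k + 1 := by rw [hodd']; exact alpha_two_mul_add_one k
      have hk0 : alpha k = 0 := by omega
      have : k = 0 := by
        by_contra hk0'
        have := alpha_pos k (by omega); omega
      omega
    · -- l₀ ≥ 2 : then l₀ - 1 ∈ B
      have hmem : l₀ - 1 ∈ B := by
        refine ⟨by omega, ?_⟩
        have h3 : n + (l₀ - 1) = 2 * k := by omega
        have h4 : alpha (n + l₀) = alpha k + 1 := by rw [hodd']; exact alpha_two_mul_add_one k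
        rw [h3, alpha_two_mul]
        omega
      have := Nat.sInf_le hmem
      omega
  -- now build the representation
  set k := (n + l₀) / 2 with hk
  have hkk : n + l₀ = 2 * k := by omega
  have hak : alpha k ≤ l₀ := by
    have : alpha (n + l₀) = alpha k := by rw [hkk]; exact alpha_two_mul k
    omega
  have hlk : l₀ ≤ k := by omega
  obtain ⟨v, hv⟩ := exists_rep l₀ hak hlk
  have hl₀A : l₀ ∈ A := by
    refine ⟨hl₀1, fun j => v j + 1, fun j => Nat.succ_pos _, ?_⟩
    have hsum2 : ∑ j : Fin l₀, ((2:ℕ) ^ (v j + 1) - 1) + l₀ = n + l₀ := by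
      have he : ∑ j : Fin l₀, ((2:ℕ) ^ (v j + 1) - 1 + 1) = ∑ j : Fin l₀, 2 ^ (v j + 1) :=
        Finset.sum_congr rfl fun j _ => Nat.succ_pred_eq_of_pos (Nat.pow_pos (by norm_num))
      have hd : ∑ j : Fin l₀, ((2:ℕ) ^ (v j + 1) - 1 + 1)
          = ∑ j : Fin l₀, ((2:ℕ) ^ (v j + 1) - 1) + l₀ := by
        rw [Finset.sum_add_distrib]; simp [Finset.card_univ]
      have hp : ∑ j : Fin l₀, (2:ℕ) ^ (v j + 1) = 2 * k := by
        rw [hv, Finset.mul_sum]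
        exact Finset.sum_congr rfl fun j _ => by ring
      omega
    show n = ∑ j : Fin l₀, ((2:ℕ) ^ (v j + 1) - 1)
    omega
  -- conclude
  have h1 : mu n ≤ l₀ := Nat.sInf_le hl₀A
  have h2 : l₀ ≤ mu n := Nat.sInf_le (hAB (Nat.sInf_mem ⟨n, hnA⟩))
  omega
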